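/- For every s > 0, every n ∈ ℕ with n ≥ 1, and all θ, θ* > 0, all the integrals below converge absolutely and (Γ(2s)/Γ(2s+n)) · ∫₀^∞ γ_θ(x) [ ∫₀¹ u^{−1}(1−u)^{2s−1} (((1−u)x)^n − x^n) du + ∫₀^∞ u^{−1} e^{−u} ((x + uθ*)^n − x^n) du ] dx = ∫₀¹ u^{−1}(1−u)^{2s−1} [ ((1−u)θ + uθ*)^n − θ^n ] du. (This is the intertwining, on monomials, of the boundary generator of the generalized continuous harmonic model with parameter s with the boundary generator of its hidden-parameter model via the Gamma kernel.) -/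

import Mathlib

open MeasureTheory Real Set

/-- The Gamma(shape 2s, scale θ) density on (0,∞). -/
noncomputable def gammaDens (s θ x : ℝ) : ℝ :=
  x ^ (2 * s - 1) * Real.exp (-x / θ) / (θ ^ (2 * s) * Real.Gamma (2 * s))

lemma betaC_eq (a c : ℝ) :
    (fun x : ℝ => (x:ℂ) ^ ((a:ℂ) - 1) * ((1:ℂ) - (x:ℂ)) ^ ((c:ℂ) - 1)) =ᵐ[volume.restrict (Set.Ioc 0 1)]
      (fun x : ℝ => ((x ^ (a - 1) * (1 - x) ^ (c - 1) : ℝ) : ℂ)) := by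
  filter_upwards [ae_restrict_mem measurableSet_Ioc] with x hx
  rw [Complex.ofReal_mul, Complex.ofReal_cpow hx.1.le, Complex.ofReal_cpow (by linarith [hx.2] : (0:ℝ) ≤ 1 - x)]
  push_cast
  ring

lemma realBeta_intble {a c : ℝ} (ha : 0 < a) (hc : 0 < c) :
    IntegrableOn (fun u : ℝ => u ^ (a - 1) * (1 - u) ^ (c - 1)) (Set.Ioo 0 1) volume := by
  have hC := (Complex.betaIntegral_convergent (u := a) (v := c) (by simpa using ha) (by simpa using hc))
  rw [intervalIntegrable_iff, Set.uIoc_of_le (by norm_num : (0:ℝ) ≤ 1)] at hC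
  have h1 : IntegrableOn (fun x : ℝ => ((x ^ (a - 1) * (1 - x) ^ (c - 1) : ℝ) : ℂ))
      (Set.Ioc 0 1) volume := hC.congr (betaC_eq a c)
  have h2 : IntegrableOn (fun u : ℝ => u ^ (a - 1) * (1 - u) ^ (c - 1)) (Set.Ioc 0 1) volume := by
    refine h1.re.congr ?_
    filter_upwards with x
    simp
  exact h2.mono_set Set.Ioo_subset_Ioc_self

lemma realBeta_eval {a c : ℝ} (ha : 0 < a) (hc : 0 < c) :
    ∫ u in Set.Ioo (0:ℝ) 1, u ^ (a - 1) * (1 - u) ^ (c - 1) =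
      Real.Gamma a * Real.Gamma c / Real.Gamma (a + c) := by
  have key : Complex.betaIntegral a c
      = ((∫ u in Set.Ioo (0:ℝ) 1, u ^ (a - 1) * (1 - u) ^ (c - 1) : ℝ) : ℂ) := by
    rw [Complex.betaIntegral, intervalIntegral.integral_of_le (by norm_num : (0:ℝ) ≤ 1)]
    rw [MeasureTheory.integral_congr_ae (betaC_eq a c)]
    rw [MeasureTheory.integral_Ioc_eq_integral_Ioo]
    exact integral_ofReal
  have hG := Complex.Gamma_mul_Gamma_eq_betaIntegral (s := (a:ℂ)) (t := (c:ℂ)) (by simpa using ha) (by simpa using hc)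
  rw [key, show ((a:ℂ) + (c:ℂ)) = ((a + c : ℝ) : ℂ) by push_cast; ring, Complex.Gamma_ofReal, Complex.Gamma_ofReal, Complex.Gamma_ofReal, ← Complex.ofReal_mul, ← Complex.ofReal_mul] at hG
  have h2 := Complex.ofReal_inj.mp hG
  have hne : Real.Gamma (a + c) ≠ 0 := (Real.Gamma_pos_of_pos (by linarith)).ne'
  field_simp
  linarith [h2]

lemma betaNat_intble {c : ℝ} (hc : 0 < c) (m : ℕ) :
    IntegrableOn (fun u : ℝ => u ^ m * (1 - u) ^ (c - 1)) (Set.Ioo 0 1) volume := by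
  refine (realBeta_intble (a := (m:ℝ) + 1) (by positivity) hc).congr_fun ?_ measurableSet_Ioo
  intro x hx
  simp only [show ((m:ℝ) + 1 - 1) = (m:ℝ) by ring, Real.rpow_natCast]

lemma betaNat_eval {c : ℝ} (hc : 0 < c) (m : ℕ) :
    ∫ u in Set.Ioo (0:ℝ) 1, u ^ m * (1 - u) ^ (c - 1)
      = (m.factorial : ℝ) * Real.Gamma c / Real.Gamma (c + m + 1) := by
  have h1 : ∫ u in Set.Ioo (0:ℝ) 1, u ^ m * (1 - u) ^ (c - 1)
      = ∫ u in Set.Ioo (0:ℝ) 1, u ^ (((m:ℝ) + 1) - 1) * (1 - u) ^ (c - 1) := by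
    refine setIntegral_congr_fun measurableSet_Ioo fun x hx => ?_
    rw [show ((m:ℝ) + 1 - 1) = (m:ℝ) by ring, Real.rpow_natCast]
  rw [h1, realBeta_eval (by positivity) hc,
    show ((m:ℝ) + 1) = ((m:ℕ):ℝ) + 1 by norm_num, Real.Gamma_nat_eq_factorial,
    show ((m:ℝ) + 1 + c) = c + m + 1 by ring]

lemma one_sub_intble {c : ℝ} (hc : 0 < c) :
    IntegrableOn (fun u : ℝ => (1 - u) ^ (c - 1)) (Set.Ioo 0 1) volume := by
  have := betaNat_intble hc 0
  simpa using this

lemma one_sub_eval {c : ℝ} (hc : 0 < c) :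
    ∫ u in Set.Ioo (0:ℝ) 1, (1 - u) ^ (c - 1) = 1 / c := by
  have := betaNat_eval hc 0
  simp only [pow_zero, one_mul, Nat.factorial_zero, Nat.cast_one, Nat.cast_zero, add_zero] at this
  rw [this, Real.Gamma_add_one hc.ne']
  field_simp

lemma gammaMoment_intble {s θ : ℝ} (hs : 0 < s) (hθ : 0 < θ) (m : ℕ) :
    IntegrableOn (fun x : ℝ => gammaDens s θ x * x ^ m) (Set.Ioi 0) volume := by
  have base : IntegrableOn (fun x : ℝ => x ^ (2 * s - 1 + m) * Real.exp (-(1/θ) * x ^ (1:ℝ)))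
      (Set.Ioi 0) volume := by
    refine integrableOn_rpow_mul_exp_neg_mul_rpow ?_ one_pos (by positivity)
    have : (0:ℝ) ≤ m := Nat.cast_nonneg m
    linarith
  have h : IntegrableOn (fun x : ℝ => (θ ^ (2 * s) * Real.Gamma (2 * s))⁻¹ *
      (x ^ (2 * s - 1 + m) * Real.exp (-(1/θ) * x ^ (1:ℝ)))) (Set.Ioi 0) volume :=
    base.const_mul ((θ ^ (2 * s) * Real.Gamma (2 * s))⁻¹)
  refine h.congr_fun ?_ measurableSet_Ioi
  intro x hx
  have hx : (0:ℝ) < x := hx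
  simp only [Real.rpow_one, gammaDens, Real.rpow_add hx, Real.rpow_natCast,
    show -(1/θ) * x = -x/θ by ring]
  field_simp

lemma gammaMoment_eval {s θ : ℝ} (hs : 0 < s) (hθ : 0 < θ) (m : ℕ) :
    ∫ x in Set.Ioi (0:ℝ), gammaDens s θ x * x ^ m
      = θ ^ m * Real.Gamma (2 * s + m) / Real.Gamma (2 * s) := by
  have hq : (-1:ℝ) < 2 * s - 1 + m := by
    have : (0:ℝ) ≤ m := Nat.cast_nonneg m
    linarith
  have h1 : ∫ x in Set.Ioi (0:ℝ), gammaDens s θ x * x ^ m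
      = ∫ x in Set.Ioi (0:ℝ), (θ ^ (2 * s) * Real.Gamma (2 * s))⁻¹ *
          (x ^ (2 * s - 1 + m) * Real.exp (-(1/θ) * x ^ (1:ℝ))) := by
    refine setIntegral_congr_fun measurableSet_Ioi fun x hx => ?_
    have hx : (0:ℝ) < x := hx
    simp only [Real.rpow_one, gammaDens, Real.rpow_add hx, Real.rpow_natCast,
      show -(1/θ) * x = -x/θ by ring]
    field_simp
  rw [h1, MeasureTheory.integral_const_mul,
    integral_rpow_mul_exp_neg_mul_rpow one_pos hq (by positivity)]
  have hGpos := Real.Gamma_pos_of_pos (by positivity : (0:ℝ) < 2 * s)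
  have hθ2s := Real.rpow_pos_of_pos hθ (2 * s)
  rw [show (2 * s - 1 + ↑m + 1) = 2 * s + m by ring, div_one, div_one]
  rw [show (1/θ) = θ⁻¹ by ring, Real.inv_rpow hθ.le, Real.rpow_neg hθ.le, inv_inv,
    Real.rpow_add hθ, Real.rpow_natCast]
  field_simp

lemma innerA_rw {s : ℝ} (n : ℕ) (x : ℝ) {u : ℝ} (hu : u ∈ Set.Ioo (0:ℝ) 1) :
    u⁻¹ * (1 - u) ^ (2 * s - 1) * (((1 - u) * x) ^ n - x ^ n)
      = ∑ j ∈ Finset.range n, (-(x ^ n)) * (1 - u) ^ ((2 * s + j) - 1) := by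
  have hu0 : u ≠ 0 := ne_of_gt hu.1
  have ht : (0:ℝ) < 1 - u := by linarith [hu.2]
  have ht1 : (1:ℝ) - u ≠ 1 := by intro h; apply hu0; linarith [h]
  have hgeom := geom_sum_eq ht1 n
  have hpow : (1 - u) ^ n - 1 = (∑ i ∈ Finset.range n, (1 - u) ^ i) * (-u) := by
    rw [hgeom]; field_simp; ring
  have hterm : ∀ j ∈ Finset.range n,
      (-(x ^ n)) * ((1 - u) ^ j * (1 - u) ^ (2 * s - 1))
        = (-(x ^ n)) * (1 - u) ^ ((2 * s + j) - 1) := by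
    intro j _
    rw [← Real.rpow_natCast (1 - u) j, ← Real.rpow_add ht]
    ring_nf
  calc u⁻¹ * (1 - u) ^ (2 * s - 1) * (((1 - u) * x) ^ n - x ^ n)
      = u⁻¹ * (1 - u) ^ (2 * s - 1) * (((1 - u) ^ n - 1) * x ^ n) := by rw [mul_pow]; ring
    _ = u⁻¹ * (1 - u) ^ (2 * s - 1) * ((∑ i ∈ Finset.range n, (1 - u) ^ i) * (-u) * x ^ n) := by
        rw [hpow]
    _ = ∑ j ∈ Finset.range n, (-(x ^ n)) * ((1 - u) ^ j * (1 - u) ^ (2 * s - 1)) := by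
        rw [Finset.sum_mul, Finset.sum_mul, Finset.mul_sum]
        refine Finset.sum_congr rfl fun j _ => ?_
        field_simp
    _ = ∑ j ∈ Finset.range n, (-(x ^ n)) * (1 - u) ^ ((2 * s + j) - 1) :=
        Finset.sum_congr rfl hterm

lemma innerA_intble {s : ℝ} (hs : 0 < s) (n : ℕ) (x : ℝ) :
    IntegrableOn (fun u : ℝ => u⁻¹ * (1 - u) ^ (2 * s - 1) * (((1 - u) * x) ^ n - x ^ n))
      (Set.Ioo 0 1) volume := by
  have h : IntegrableOn (fun u : ℝ => ∑ j ∈ Finset.range n, (-(x ^ n)) * (1 - u) ^ ((2 * s + j) - 1))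
      (Set.Ioo 0 1) volume := by
    refine integrable_finset_sum _ fun j _ => ?_
    exact (one_sub_intble (by positivity : (0:ℝ) < 2 * s + j)).const_mul _
  exact h.congr_fun (fun u hu => (innerA_rw n x hu).symm) measurableSet_Ioo

lemma innerA_eval {s : ℝ} (hs : 0 < s) (n : ℕ) (x : ℝ) :
    ∫ u in Set.Ioo (0:ℝ) 1, u⁻¹ * (1 - u) ^ (2 * s - 1) * (((1 - u) * x) ^ n - x ^ n)
      = -(∑ j ∈ Finset.range n, 1 / (2 * s + j)) * x ^ n := by
  rw [setIntegral_congr_fun measurableSet_Ioo (fun u hu => innerA_rw n x hu)]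
  rw [MeasureTheory.integral_finset_sum (μ := volume.restrict (Set.Ioo 0 1)) (Finset.range n)
    (f := fun (j : ℕ) (u : ℝ) => (-(x ^ n)) * (1 - u) ^ ((2 * s + j) - 1))
    (fun j _ => ((one_sub_intble (by positivity : (0:ℝ) < 2 * s + j)).const_mul _))]
  have : ∀ j ∈ Finset.range n,
      ∫ u in Set.Ioo (0:ℝ) 1, (-(x ^ n)) * (1 - u) ^ ((2 * s + j) - 1)
        = (-(x ^ n)) * (1 / (2 * s + j)) := by
    intro j _
    rw [MeasureTheory.integral_const_mul, one_sub_eval (by positivity : (0:ℝ) < 2 * s + j)]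
  rw [Finset.sum_congr rfl this, ← Finset.mul_sum]
  ring

lemma expPow_intble (m : ℕ) :
    IntegrableOn (fun u : ℝ => Real.exp (-u) * u ^ m) (Set.Ioi 0) volume := by
  have h := Real.GammaIntegral_convergent (s := (m:ℝ) + 1) (by positivity)
  refine h.congr_fun ?_ measurableSet_Ioi
  intro x hx
  simp only [show ((m:ℝ) + 1 - 1) = (m:ℝ) by ring, Real.rpow_natCast]

lemma expPow_eval (m : ℕ) :
    ∫ u in Set.Ioi (0:ℝ), Real.exp (-u) * u ^ m = (m.factorial : ℝ) := by
  have h := (Real.Gamma_eq_integral (s := (m:ℝ) + 1) (by positivity)).symm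
  rw [show ((m:ℝ) + 1) = ((m:ℕ):ℝ) + 1 by norm_num, Real.Gamma_nat_eq_factorial] at h
  rw [← h]
  refine setIntegral_congr_fun measurableSet_Ioi fun x hx => ?_
  simp only [show ((m:ℝ) + 1 - 1) = (m:ℝ) by ring, Real.rpow_natCast]

lemma innerB_rw (n : ℕ) (x θs : ℝ) {u : ℝ} (hu : u ∈ Set.Ioi (0:ℝ)) :
    u⁻¹ * Real.exp (-u) * ((x + u * θs) ^ n - x ^ n)
      = ∑ k ∈ Finset.range n,
          (x ^ k * θs ^ (n - k) * (n.choose k : ℝ)) * (Real.exp (-u) * u ^ (n - k - 1)) := by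
  have hu0 : u ≠ 0 := ne_of_gt hu
  have hb : (x + u * θs) ^ n = ∑ k ∈ Finset.range (n + 1),
      x ^ k * (u * θs) ^ (n - k) * (n.choose k : ℝ) := add_pow x (u * θs) n
  rw [hb, Finset.sum_range_succ]
  simp only [Nat.sub_self, pow_zero, Nat.choose_self, Nat.cast_one, mul_one]
  rw [add_sub_cancel_right, Finset.mul_sum]
  refine Finset.sum_congr rfl fun k hk => ?_
  have hk' : k < n := Finset.mem_range.mp hk
  have hsplit : u ^ (n - k) = u ^ (n - k - 1) * u := by
    rw [← pow_succ]
    congr 1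
    omega
  rw [mul_pow, hsplit]
  field_simp

lemma innerB_intble (n : ℕ) (x θs : ℝ) :
    IntegrableOn (fun u : ℝ => u⁻¹ * Real.exp (-u) * ((x + u * θs) ^ n - x ^ n))
      (Set.Ioi 0) volume := by
  have h : IntegrableOn (fun u : ℝ => ∑ k ∈ Finset.range n,
      (x ^ k * θs ^ (n - k) * (n.choose k : ℝ)) * (Real.exp (-u) * u ^ (n - k - 1)))
      (Set.Ioi 0) volume := by
    refine integrable_finset_sum _ fun k _ => ?_
    exact (expPow_intble (n - k - 1)).const_mul _
  exact h.congr_fun (fun u hu => (innerB_rw n x θs hu).symm) measurableSet_Ioi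

lemma innerB_eval (n : ℕ) (x θs : ℝ) :
    ∫ u in Set.Ioi (0:ℝ), u⁻¹ * Real.exp (-u) * ((x + u * θs) ^ n - x ^ n)
      = ∑ k ∈ Finset.range n,
          x ^ k * θs ^ (n - k) * (n.choose k : ℝ) * ((n - k - 1).factorial : ℝ) := by
  rw [setIntegral_congr_fun measurableSet_Ioi (fun u hu => innerB_rw n x θs hu)]
  rw [MeasureTheory.integral_finset_sum (μ := volume.restrict (Set.Ioi 0)) (Finset.range n)
    (f := fun (k : ℕ) (u : ℝ) =>
      (x ^ k * θs ^ (n - k) * (n.choose k : ℝ)) * (Real.exp (-u) * u ^ (n - k - 1)))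
    (fun k _ => (expPow_intble (n - k - 1)).const_mul _)]
  refine Finset.sum_congr rfl fun k _ => ?_
  rw [MeasureTheory.integral_const_mul, expPow_eval]

lemma rhs_rw {s : ℝ} (n : ℕ) (θ θs : ℝ) {u : ℝ} (hu : u ∈ Set.Ioo (0:ℝ) 1) :
    u⁻¹ * (1 - u) ^ (2 * s - 1) * (((1 - u) * θ + u * θs) ^ n - θ ^ n)
      = (∑ k ∈ Finset.range n, (θ ^ k * θs ^ (n - k) * (n.choose k : ℝ)) *
            (u ^ (n - k - 1) * (1 - u) ^ ((2 * s + k) - 1)))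
        + u⁻¹ * (1 - u) ^ (2 * s - 1) * (((1 - u) * θ) ^ n - θ ^ n) := by
  have hu0 : u ≠ 0 := ne_of_gt hu.1
  have ht : (0:ℝ) < 1 - u := by linarith [hu.2]
  have hb : ((1 - u) * θ + u * θs) ^ n = ∑ k ∈ Finset.range (n + 1),
      ((1 - u) * θ) ^ k * (u * θs) ^ (n - k) * (n.choose k : ℝ) := add_pow _ _ n
  rw [hb, Finset.sum_range_succ]
  simp only [Nat.sub_self, pow_zero, Nat.choose_self, Nat.cast_one, mul_one]
  have hrearr : ∀ a b c : ℝ, (a + b) - c = a + (b - c) := fun a b c => by ring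
  rw [hrearr, mul_add, Finset.mul_sum]
  congr 1
  refine Finset.sum_congr rfl fun k hk => ?_
  have hk' : k < n := Finset.mem_range.mp hk
  have hsplit : u ^ (n - k) = u ^ (n - k - 1) * u := by
    rw [← pow_succ]; congr 1; omega
  rw [show ((2 * s + (k:ℝ)) - 1) = (2 * s - 1) + (k:ℝ) by ring, Real.rpow_add ht,
    Real.rpow_natCast]
  rw [mul_pow, mul_pow, hsplit]
  field_simp

lemma rhs_intble {s : ℝ} (hs : 0 < s) (n : ℕ) (θ θs : ℝ) :
    IntegrableOn (fun u : ℝ => u⁻¹ * (1 - u) ^ (2 * s - 1) * (((1 - u) * θ + u * θs) ^ n - θ ^ n))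
      (Set.Ioo 0 1) volume := by
  have h : IntegrableOn (fun u : ℝ =>
      (∑ k ∈ Finset.range n, (θ ^ k * θs ^ (n - k) * (n.choose k : ℝ)) *
            (u ^ (n - k - 1) * (1 - u) ^ ((2 * s + k) - 1)))
        + u⁻¹ * (1 - u) ^ (2 * s - 1) * (((1 - u) * θ) ^ n - θ ^ n)) (Set.Ioo 0 1) volume := by
    refine MeasureTheory.Integrable.add ?_ (innerA_intble hs n θ)
    refine integrable_finset_sum (Finset.range n) fun (k : ℕ) _ => ?_
    exact (betaNat_intble (by positivity : (0:ℝ) < 2 * s + k) (n - k - 1)).const_mul _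
  exact h.congr_fun (fun u hu => (rhs_rw n θ θs hu).symm) measurableSet_Ioo

lemma rhs_eval {s : ℝ} (hs : 0 < s) (n : ℕ) (θ θs : ℝ) :
    ∫ u in Set.Ioo (0:ℝ) 1, u⁻¹ * (1 - u) ^ (2 * s - 1) * (((1 - u) * θ + u * θs) ^ n - θ ^ n)
      = (∑ k ∈ Finset.range n, (θ ^ k * θs ^ (n - k) * (n.choose k : ℝ)) *
            (((n - k - 1 : ℕ).factorial : ℝ) * Real.Gamma (2 * s + k) / Real.Gamma (2 * s + n)))
        + (-(∑ j ∈ Finset.range n, 1 / (2 * s + j)) * θ ^ n) := by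
  rw [setIntegral_congr_fun measurableSet_Ioo (fun u hu => rhs_rw n θ θs hu)]
  rw [MeasureTheory.integral_add
    (integrable_finset_sum (Finset.range n) fun (k : ℕ) _ =>
      ((betaNat_intble (by positivity : (0:ℝ) < 2 * s + k) (n - k - 1)).const_mul _))
    (innerA_intble hs n θ)]
  rw [innerA_eval hs n θ]
  congr 1
  rw [MeasureTheory.integral_finset_sum (μ := volume.restrict (Set.Ioo 0 1)) (Finset.range n)
    (f := fun (k : ℕ) (u : ℝ) => (θ ^ k * θs ^ (n - k) * (n.choose k : ℝ)) *
      (u ^ (n - k - 1) * (1 - u) ^ ((2 * s + k) - 1)))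
    (fun k _ => ((betaNat_intble (by positivity : (0:ℝ) < 2 * s + k) (n - k - 1)).const_mul _))]
  refine Finset.sum_congr rfl fun k hk => ?_
  have hk' : k < n := Finset.mem_range.mp hk
  rw [MeasureTheory.integral_const_mul, betaNat_eval (by positivity : (0:ℝ) < 2 * s + k) (n - k - 1)]
  have hcast : ((n - k - 1 : ℕ) : ℝ) + (k:ℝ) + 1 = (n:ℝ) := by
    exact_mod_cast congrArg (Nat.cast : ℕ → ℝ) (by omega : (n - k - 1) + k + 1 = n)
  rw [show (2 * s + (k:ℝ) + ((n - k - 1 : ℕ):ℝ) + 1) = 2 * s + (n:ℝ) by linarith]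

/-- Intertwining, on monomials, of the boundary generator of the generalized continuous
harmonic model with parameter `s` with the boundary generator of its hidden-parameter model
via the Gamma kernel. -/
theorem gen_harmonic_boundary_intertwining (s : ℝ) (hs : 0 < s) (n : ℕ) (hn : 1 ≤ n)
    (θ θs : ℝ) (hθ : 0 < θ) (hθs : 0 < θs) :
    (∀ x : ℝ, 0 ≤ x →
      IntegrableOn (fun u : ℝ => u⁻¹ * (1 - u) ^ (2 * s - 1) * (((1 - u) * x) ^ n - x ^ n))
        (Set.Ioo 0 1) volume) ∧
    (∀ x : ℝ, 0 ≤ x →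
      IntegrableOn (fun u : ℝ => u⁻¹ * Real.exp (-u) * ((x + u * θs) ^ n - x ^ n))
        (Set.Ioi 0) volume) ∧
    IntegrableOn (fun x : ℝ => gammaDens s θ x *
      ((∫ u in Set.Ioo (0:ℝ) 1, u⁻¹ * (1 - u) ^ (2 * s - 1) * (((1 - u) * x) ^ n - x ^ n)) +
       (∫ u in Set.Ioi (0:ℝ), u⁻¹ * Real.exp (-u) * ((x + u * θs) ^ n - x ^ n))))
      (Set.Ioi 0) volume ∧
    IntegrableOn (fun u : ℝ => u⁻¹ * (1 - u) ^ (2 * s - 1) * (((1 - u) * θ + u * θs) ^ n - θ ^ n))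
      (Set.Ioo 0 1) volume ∧
    (Real.Gamma (2 * s) / Real.Gamma (2 * s + n)) *
      (∫ x in Set.Ioi (0:ℝ), gammaDens s θ x *
        ((∫ u in Set.Ioo (0:ℝ) 1, u⁻¹ * (1 - u) ^ (2 * s - 1) * (((1 - u) * x) ^ n - x ^ n)) +
         (∫ u in Set.Ioi (0:ℝ), u⁻¹ * Real.exp (-u) * ((x + u * θs) ^ n - x ^ n))))
      = ∫ u in Set.Ioo (0:ℝ) 1,
          u⁻¹ * (1 - u) ^ (2 * s - 1) * (((1 - u) * θ + u * θs) ^ n - θ ^ n) := by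
  have hG2s : Real.Gamma (2 * s) ≠ 0 := (Real.Gamma_pos_of_pos (by linarith)).ne'
  have hG2sn : Real.Gamma (2 * s + n) ≠ 0 := by
    refine (Real.Gamma_pos_of_pos ?_).ne'
    have : (0:ℝ) ≤ n := Nat.cast_nonneg n
    linarith
  set C₀ : ℝ := ∑ j ∈ Finset.range n, 1 / (2 * s + j) with hC₀
  set a : ℕ → ℝ := fun k => θs ^ (n - k) * (n.choose k : ℝ) * ((n - k - 1 : ℕ).factorial : ℝ)
    with ha
  -- the evaluated integrand
  have hEq : ∀ x : ℝ,
      (-(C₀)) * (gammaDens s θ x * x ^ n)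
        + ∑ k ∈ Finset.range n, a k * (gammaDens s θ x * x ^ k)
      = gammaDens s θ x *
        ((∫ u in Set.Ioo (0:ℝ) 1, u⁻¹ * (1 - u) ^ (2 * s - 1) * (((1 - u) * x) ^ n - x ^ n)) +
         (∫ u in Set.Ioi (0:ℝ), u⁻¹ * Real.exp (-u) * ((x + u * θs) ^ n - x ^ n))) := by
    intro x
    rw [innerA_eval hs n x, innerB_eval n x θs, mul_add, Finset.mul_sum]
    congr 1
    · ring
    · refine Finset.sum_congr rfl fun k _ => ?_
      simp only [ha]
      ring
  have hg1 : IntegrableOn (fun x : ℝ => (-(C₀)) * (gammaDens s θ x * x ^ n)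
      + ∑ k ∈ Finset.range n, a k * (gammaDens s θ x * x ^ k)) (Set.Ioi 0) volume := by
    refine ((gammaMoment_intble hs hθ n).const_mul _).add ?_
    exact integrable_finset_sum (Finset.range n) fun (k : ℕ) _ =>
      (gammaMoment_intble hs hθ k).const_mul _
  have claim3 : IntegrableOn (fun x : ℝ => gammaDens s θ x *
      ((∫ u in Set.Ioo (0:ℝ) 1, u⁻¹ * (1 - u) ^ (2 * s - 1) * (((1 - u) * x) ^ n - x ^ n)) +
       (∫ u in Set.Ioi (0:ℝ), u⁻¹ * Real.exp (-u) * ((x + u * θs) ^ n - x ^ n))))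
      (Set.Ioi 0) volume :=
    hg1.congr_fun (fun x _ => hEq x) measurableSet_Ioi
  refine ⟨fun x _ => innerA_intble hs n x, fun x _ => innerB_intble n x θs, claim3,
    rhs_intble hs n θ θs, ?_⟩
  have hIorig : (∫ x in Set.Ioi (0:ℝ), gammaDens s θ x *
      ((∫ u in Set.Ioo (0:ℝ) 1, u⁻¹ * (1 - u) ^ (2 * s - 1) * (((1 - u) * x) ^ n - x ^ n)) +
       (∫ u in Set.Ioi (0:ℝ), u⁻¹ * Real.exp (-u) * ((x + u * θs) ^ n - x ^ n))))
      = (-(C₀)) * (θ ^ n * Real.Gamma (2 * s + n) / Real.Gamma (2 * s))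
        + ∑ k ∈ Finset.range n, a k * (θ ^ k * Real.Gamma (2 * s + k) / Real.Gamma (2 * s)) := by
    rw [← setIntegral_congr_fun measurableSet_Ioi (fun x (_ : x ∈ Set.Ioi (0:ℝ)) => hEq x)]
    rw [MeasureTheory.integral_add ((gammaMoment_intble hs hθ n).const_mul _)
      (integrable_finset_sum (Finset.range n) fun (k : ℕ) _ =>
        (gammaMoment_intble hs hθ k).const_mul _)]
    rw [MeasureTheory.integral_const_mul, gammaMoment_eval hs hθ n]
    congr 1
    rw [MeasureTheory.integral_finset_sum (μ := volume.restrict (Set.Ioi 0)) (Finset.range n)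
      (f := fun (k : ℕ) (x : ℝ) => a k * (gammaDens s θ x * x ^ k))
      (fun k _ => (gammaMoment_intble hs hθ k).const_mul _)]
    refine Finset.sum_congr rfl fun k _ => ?_
    rw [MeasureTheory.integral_const_mul, gammaMoment_eval hs hθ k]
  rw [hIorig, rhs_eval hs n θ θs, mul_add, add_comm]
  congr 1
  · rw [Finset.mul_sum]
    refine Finset.sum_congr rfl fun k _ => ?_
    simp only [ha]
    field_simp
  · field_simp
    ring
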